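/- For any density matrices ρ₀, ρ₁ on ℂ^n there exist positive semidefinite matrices M₀, M₁ with M₀ + M₁ = I such that the (real, nonnegative) success probability satisfies (1/2)·Tr(M₀ρ₀) + (1/2)·Tr(M₁ρ₁) ≥ (1/2)(1 + Δ(ρ₀,ρ₁)). In other words, a uniformly random one of two states can be identified by some two-outcome measurement with probability at least (1/2)(1 + Δ(ρ₀,ρ₁)). -/

import Mathlib

open Matrix Kronecker ComplexOrder

/-- The trace norm `‖A‖₁ = Tr √(Aᴴ A)` of a complex matrix. -/
noncomputable def traceNorm {n : Type*} [Fintype n] [DecidableEq n] (A : Matrix n n ℂ) : ℝ :=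
  (((Matrix.posSemidef_conjTranspose_mul_self A).1.eigenvectorUnitary.1 *
      diagonal (((↑) : ℝ → ℂ) ∘ (√·) ∘ (Matrix.posSemidef_conjTranspose_mul_self A).1.eigenvalues) *
      (star (Matrix.posSemidef_conjTranspose_mul_self A).1.eigenvectorUnitary : Matrix n n ℂ)).trace).re

/-- The trace distance `Δ(ρ,σ) = ‖ρ - σ‖₁ / 2`. -/
noncomputable def traceDist {n : Type*} [Fintype n] [DecidableEq n] (ρ σ : Matrix n n ℂ) : ℝ :=
  traceNorm (ρ - σ) / 2

open scoped Classical in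
/-- Positive semidefinite square root (junk value `0` on non-PSD matrices). -/
noncomputable def psdSqrt {n : Type*} [Fintype n] [DecidableEq n] (A : Matrix n n ℂ) :
    Matrix n n ℂ :=
  if h : A.PosSemidef then
    h.1.eigenvectorUnitary.1 * diagonal ((↑) ∘ (√·) ∘ h.1.eigenvalues) *
      (star h.1.eigenvectorUnitary : Matrix n n ℂ) else 0

/-- The fidelity `F(ρ,σ) = ‖√ρ √σ‖₁`. -/
noncomputable def fidelity {n : Type*} [Fintype n] [DecidableEq n] (ρ σ : Matrix n n ℂ) : ℝ :=
  traceNorm (psdSqrt ρ * psdSqrt σ)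

/-- A density matrix: positive semidefinite with trace 1. -/
def IsDensityMatrix {n : Type*} [Fintype n] [DecidableEq n] (ρ : Matrix n n ℂ) : Prop :=
  ρ.PosSemidef ∧ ρ.trace = 1

/-- The projector `|b⟩⟨b|` on ℂ². -/
noncomputable def proj (b : Bool) : Matrix Bool Bool ℂ := Matrix.single b b 1

/-- The strong oblivious transfer channel `F_{(x₀,x₁)}`. -/
noncomputable def sotChannel (x₀ x₁ : Bool) (ρ : Matrix (Bool × Bool) (Bool × Bool) ℂ) :
    Matrix (Bool × Bool) (Bool × Bool) ℂ :=
  ∑ i : Bool, ∑ i' : Bool,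
    ρ (i, i') (i, i') •
      (((1/2 : ℂ) • (1 : Matrix Bool Bool ℂ)) ⊗ₖ proj (xor (bif xor i i' then x₁ else x₀) i'))

/-- Holevo–Helstrom, achievability direction. -/
theorem stmt_2 {n : ℕ} (ρ₀ ρ₁ : Matrix (Fin n) (Fin n) ℂ)
    (h₀ : IsDensityMatrix ρ₀) (h₁ : IsDensityMatrix ρ₁) :
    ∃ M₀ M₁ : Matrix (Fin n) (Fin n) ℂ, M₀.PosSemidef ∧ M₁.PosSemidef ∧ M₀ + M₁ = 1 ∧
      (1/2 : ℝ) * ((M₀ * ρ₀).trace).re + (1/2 : ℝ) * ((M₁ * ρ₁).trace).re ≥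
        (1/2 : ℝ) * (1 + traceDist ρ₀ ρ₁) := by
  set A := ρ₀ - ρ₁ with hAdef
  have hA : A.IsHermitian := h₀.1.1.sub h₁.1.1
  set U : Matrix (Fin n) (Fin n) ℂ := (hA.eigenvectorUnitary : Matrix (Fin n) (Fin n) ℂ) with hU
  set lam := hA.eigenvalues with hlam
  have hUU : star U * U = 1 := Unitary.coe_star_mul_self hA.eigenvectorUnitary
  have hUU' : U * star U = 1 := Unitary.coe_mul_star_self hA.eigenvectorUnitary
  have conjmul : ∀ f g : Fin n → ℂ, (U * diagonal f * star U) * (U * diagonal g * star U)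
      = U * diagonal (fun i => f i * g i) * star U := by
    intro f g
    rw [Matrix.mul_assoc (U * diagonal f) (star U) (U * diagonal g * star U),
      ← Matrix.mul_assoc (star U) (U * diagonal g) (star U),
      ← Matrix.mul_assoc (star U) U (diagonal g), hUU, Matrix.one_mul,
      ← Matrix.mul_assoc (U * diagonal f) (diagonal g) (star U),
      Matrix.mul_assoc U (diagonal f) (diagonal g), diagonal_mul_diagonal]
  have keytr : ∀ f : Fin n → ℂ, (U * diagonal f * star U).trace = ∑ i, f i := by
    intro f
    rw [Matrix.trace_mul_cycle, hUU, Matrix.one_mul, trace_diagonal]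
  have hspec : A = U * diagonal (fun i => (lam i : ℂ)) * star U := hA.spectral_theorem
  set d : Fin n → ℂ := fun i => if 0 ≤ lam i then 1 else 0 with hd
  refine ⟨U * diagonal d * star U, U * diagonal (fun i => 1 - d i) * star U, ?_, ?_, ?_, ?_⟩
  · refine PosSemidef.mul_mul_conjTranspose_same (posSemidef_diagonal_iff.mpr fun i => ?_) U
    simp only [hd]
    split <;> norm_num
  · refine PosSemidef.mul_mul_conjTranspose_same (posSemidef_diagonal_iff.mpr fun i => ?_) U
    simp only [hd]
    split <;> norm_num
  · have hdd : diagonal d + diagonal (fun i => 1 - d i) = 1 := by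
      ext i j
      by_cases h : i = j <;> simp [diagonal_apply, h, Matrix.one_apply]
    rw [← Matrix.add_mul, ← Matrix.mul_add, hdd, Matrix.mul_one, hUU']
  -- sum of eigenvalues is zero
  have htrA : ∑ i, lam i = 0 := by
    have h1 : A.trace = 0 := by
      rw [hAdef, Matrix.trace_sub, h₀.2, h₁.2, sub_self]
    have h2 : A.trace = ∑ i, (lam i : ℂ) := by rw [hspec, keytr]
    have h3 := h2.symm.trans h1
    have := congrArg Complex.re h3
    simpa using this
  -- trace norm of A
  have hS : traceNorm A = ∑ i, |lam i| := by
    have hsq : (U * diagonal (fun i => ((|lam i| : ℝ) : ℂ)) * star U) ^ 2 = Aᴴ * A := by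
      rw [hA.eq, pow_two, conjmul]
      conv_rhs => rw [hspec]
      rw [conjmul]
      have habs : (fun i => ((|lam i| : ℝ) : ℂ) * ((|lam i| : ℝ) : ℂ))
          = (fun i => ((lam i : ℝ) : ℂ) * ((lam i : ℝ) : ℂ)) := by
        funext i
        rw [← Complex.ofReal_mul, ← Complex.ofReal_mul, abs_mul_abs_self]
      rw [habs]
    have hpsd : (U * diagonal (fun i => ((|lam i| : ℝ) : ℂ)) * star U).PosSemidef := by
      refine PosSemidef.mul_mul_conjTranspose_same (posSemidef_diagonal_iff.mpr fun i => ?_) U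
      exact Complex.zero_le_real.mpr (abs_nonneg (lam i))
    have heq : (posSemidef_conjTranspose_mul_self A).1.eigenvectorUnitary.1 *
        diagonal (((↑) : ℝ → ℂ) ∘ (√·) ∘ (posSemidef_conjTranspose_mul_self A).1.eigenvalues) *
        (star (posSemidef_conjTranspose_mul_self A).1.eigenvectorUnitary : Matrix (Fin n) (Fin n) ℂ)
        = U * diagonal (fun i => ((|lam i| : ℝ) : ℂ)) * star U := by
      open scoped MatrixOrder in
      have h1 := (posSemidef_conjTranspose_mul_self A).1.cfc_eq Real.sqrt
      open scoped MatrixOrder in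
      rw [IsHermitian.cfc, Unitary.conjStarAlgAut_apply, ← cfcₙ_eq_cfc (hf0 := Real.sqrt_zero), ← CFC.sqrt_eq_real_sqrt _
        (posSemidef_conjTranspose_mul_self A).nonneg] at h1
      open scoped MatrixOrder in
      refine h1.symm.trans ?_
      open scoped MatrixOrder in
      rw [CFC.sqrt_eq_iff _ _ (posSemidef_conjTranspose_mul_self A).nonneg hpsd.nonneg,
        ← sq]
      exact hsq
    rw [traceNorm, heq, keytr, Complex.re_sum]
    simp
  -- trace of M₀ * A
  have hM0A : ((U * diagonal d * star U) * A).trace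
      = ∑ i, (if 0 ≤ lam i then (lam i : ℂ) else 0) := by
    conv_lhs => rw [hspec]
    rw [conjmul, keytr]
    refine Finset.sum_congr rfl fun i _ => ?_
    simp only [hd]
    split <;> simp
  have hsum : (∑ i, (if 0 ≤ lam i then lam i else 0)) = traceNorm A / 2 := by
    rw [hS, eq_div_iff (by norm_num : (2:ℝ) ≠ 0)]
    have h4 : ∀ i ∈ Finset.univ, (if 0 ≤ lam i then lam i else 0) * 2 = |lam i| + lam i := by
      intro i _
      rcases le_or_gt 0 (lam i) with h | h
      · rw [if_pos h, abs_of_nonneg h]; ring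
      · rw [if_neg (not_le.mpr h), abs_of_neg h]; ring
    rw [Finset.sum_mul, Finset.sum_congr rfl h4, Finset.sum_add_distrib, htrA, add_zero]
  have hdist : traceDist ρ₀ ρ₁ = traceNorm A / 2 := rfl
  have hre : (((U * diagonal d * star U) * A).trace).re = traceNorm A / 2 := by
    rw [hM0A, Complex.re_sum, ← hsum]
    refine Finset.sum_congr rfl fun i _ => ?_
    split <;> simp
  have hone : (U * diagonal (fun i => 1 - d i) * star U)
      = 1 - (U * diagonal d * star U) := by
    have hdd : diagonal (fun i => 1 - d i) = 1 - diagonal d := by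
      ext i j
      by_cases h : i = j <;> simp [diagonal_apply, h, Matrix.one_apply]
    rw [hdd, Matrix.mul_sub, Matrix.mul_one, Matrix.sub_mul, hUU']
  have htot : ((U * diagonal d * star U) * ρ₀).trace
      + ((U * diagonal (fun i => 1 - d i) * star U) * ρ₁).trace
      = 1 + ((U * diagonal d * star U) * A).trace := by
    rw [hone, Matrix.sub_mul, Matrix.one_mul, Matrix.trace_sub, hAdef, Matrix.mul_sub,
      Matrix.trace_sub, h₁.2]
    ring
  have hretot := congrArg Complex.re htot
  simp only [Complex.add_re, Complex.one_re, Complex.sub_re] at hretot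
  rw [ge_iff_le, hdist, ← hre]
  linarith [hretot]
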